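/- Let g ∈ SO(E) be a special orthogonal transformation of a finite-dimensional real inner product space E such that 1 is not an eigenvalue of g. Then the principal logarithm log₀(-g) can be written in the form ξ - πJ_ξ for some skew-adjoint ξ with exp(ξ) = g, where J_ξ is the natural unitary structure associated to ξ. -/

import Mathlib

open scoped RealInnerProductSpace

open ContinuousLinearMap in
lemma existsJ_aux (E : Type*) [NormedAddCommGroup E] [InnerProductSpace ℝ E]
    [FiniteDimensional ℝ E] (η : E →L[ℝ] E) (hη : ContinuousLinearMap.adjoint η = -η)
    (heven : Even (Module.finrank ℝ E)) :
    ∃ J : E →L[ℝ] E, (∀ u v : E, ⟪J u, J v⟫ = ⟪u, v⟫) ∧ J * J = -1 ∧ η * J = J * η := by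
  classical
  have hskew : ∀ u v : E, ⟪η u, v⟫ = -⟪u, η v⟫ := by
    intro u v
    rw [← ContinuousLinearMap.adjoint_inner_right η, hη]
    simp
  set S : E →L[ℝ] E := -(η * η) with hSdef
  have hSapp : ∀ v, S v = -η (η v) := fun v => rfl
  have h1 : ∀ u v : E, ⟪S u, v⟫ = ⟪η u, η v⟫ := by
    intro u v
    rw [hSapp, inner_neg_left, hskew (η u) v, neg_neg]
  have h2 : ∀ u v : E, ⟪u, S v⟫ = ⟪η u, η v⟫ := by
    intro u v
    rw [hSapp, inner_neg_right, ← hskew u (η v)]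
  have hSsym : (S : E →ₗ[ℝ] E).IsSymmetric := by
    intro u v
    simp only [ContinuousLinearMap.coe_coe]
    rw [h1, h2]
  set b := hSsym.eigenvectorBasis rfl with hbdef
  set μ := hSsym.eigenvalues rfl with hμdef
  have hb : ∀ i, S (b i) = μ i • b i := by
    intro i
    have h3 := hSsym.apply_eigenvectorBasis rfl i
    rw [← hbdef, ← hμdef] at h3
    exact_mod_cast h3
  have horm : ∀ i j, ⟪b i, b j⟫ = if i = j then (1:ℝ) else 0 :=
    orthonormal_iff_ite.mp b.orthonormal
  have horth_eig : ∀ (v : E) (c : ℝ) j, S v = c • v → μ j ≠ c → ⟪b j, v⟫ = 0 := by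
    intro v c j hv hne
    have h2' : ⟪S (b j), v⟫ = ⟪b j, S v⟫ := hSsym (b j) v
    rw [hb j, hv, real_inner_smul_left, real_inner_smul_right] at h2'
    have h3 : (μ j - c) * ⟪b j, v⟫ = 0 := by ring_nf; linarith [h2']
    rcases mul_eq_zero.mp h3 with h | h
    · exact absurd (sub_eq_zero.mp h) hne
    · exact h
  have hker : ∀ i, μ i = 0 → η (b i) = 0 := by
    intro i h0
    have h4 : ⟪η (b i), η (b i)⟫ = 0 := by
      rw [← h1, hb i, h0, zero_smul, inner_zero_left]
    exact inner_self_eq_zero.mp h4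
  have hnn : ∀ i, 0 ≤ μ i := by
    intro i
    have hbi : ⟪b i, b i⟫ = (1:ℝ) := by simpa using horm i i
    have h4 := h1 (b i) (b i)
    rw [hb i, real_inner_smul_left, hbi, mul_one] at h4
    rw [h4]
    exact real_inner_self_nonneg
  have hevens : Even (Fintype.card {i // ¬ μ i = 0}) := by
    set N := Matrix.of (fun z w : {i // ¬ μ i = 0} => (⟪b z.1, η (b w.1)⟫ : ℝ)) with hNdef
    have hNskew : N.transpose = -N := by
      ext z w
      simp only [Matrix.transpose_apply, Matrix.neg_apply, hNdef, Matrix.of_apply]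
      rw [real_inner_comm, hskew]
    have hNdet : N.det ≠ 0 := by
      intro hdet0
      obtain ⟨x, hx0, hxv⟩ := Matrix.exists_mulVec_eq_zero_iff.mpr hdet0
      set v := ∑ w : {i // ¬ μ i = 0}, x w • b w.1 with hvdef
      have hcoef : ∀ w : {i // ¬ μ i = 0}, ⟪b w.1, v⟫ = x w := by
        intro w
        rw [hvdef, inner_sum]
        simp only [real_inner_smul_right, horm, Subtype.coe_inj, mul_ite, mul_one, mul_zero]
        simp [Subtype.coe_inj]
      have hηv : η v = 0 := by
        have hall : ∀ j, ⟪b j, η v⟫ = 0 := by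
          intro j
          by_cases hj : μ j = 0
          · have hbj : η (b j) = 0 := hker j hj
            have h5 : ⟪η (b j), v⟫ = -⟪b j, η v⟫ := hskew (b j) v
            rw [hbj, inner_zero_left] at h5
            linarith [h5]
          · have h7 : ⟪b j, η v⟫ = N.mulVec x ⟨j, hj⟩ := by
              have hηvs : η v = ∑ w : {i // ¬ μ i = 0}, x w • η (b w.1) := by
                rw [hvdef, map_sum]
                exact Finset.sum_congr rfl fun w _ => by rw [ContinuousLinearMap.map_smul]
              rw [hηvs, inner_sum]
              simp only [Matrix.mulVec, dotProduct, hNdef, Matrix.of_apply,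
                real_inner_smul_right]
              exact Finset.sum_congr rfl fun w _ => by ring
            rw [h7, hxv]
            rfl
        conv_lhs => rw [← b.sum_repr' (η v)]
        simp [hall]
      have hSv : S v = (0:ℝ) • v := by
        rw [hSapp, hηv]
        simp
      have hx : ∀ w : {i // ¬ μ i = 0}, x w = 0 := by
        intro w
        have h6 := horth_eig v 0 w.1 hSv w.2
        rwa [hcoef w] at h6
      exact hx0 (funext hx)
    have hdeq : (1:ℝ) * N.det = (-1) ^ Fintype.card {i // ¬ μ i = 0} * N.det := by
      rw [one_mul]
      conv_lhs => rw [← Matrix.det_transpose, hNskew, Matrix.det_neg]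
    have hpow : ((-1 : ℝ)) ^ Fintype.card {i // ¬ μ i = 0} = 1 :=
      (mul_right_cancel₀ hNdet hdeq).symm
    exact (neg_one_pow_eq_one_iff_even (by norm_num : (-1:ℝ) ≠ 1)).mp hpow
  have hevenZ : Even (Fintype.card {i // μ i = 0}) := by
    have hc : Fintype.card {i // ¬ μ i = 0}
        = Fintype.card (Fin (Module.finrank ℝ E)) - Fintype.card {i // μ i = 0} :=
      Fintype.card_subtype_compl _
    have hle : Fintype.card {i // μ i = 0} ≤ Fintype.card (Fin (Module.finrank ℝ E)) :=
      Fintype.card_subtype_le _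
    have hles : Fintype.card {i // ¬ μ i = 0} ≤ Fintype.card (Fin (Module.finrank ℝ E)) :=
      Fintype.card_subtype_le _
    have hZ : Fintype.card {i // μ i = 0}
        = Fintype.card (Fin (Module.finrank ℝ E)) - Fintype.card {i // ¬ μ i = 0} := by
      omega
    rw [hZ, Nat.even_sub hles]
    simp only [Fintype.card_fin]
    exact ⟨fun _ => hevens, fun _ => heven⟩
  obtain ⟨m, hm⟩ := hevenZ
  have e : {i // μ i = 0} ≃ (Fin m × Bool) := Fintype.equivOfCardEq (by
    rw [Fintype.card_prod, Fintype.card_bool, Fintype.card_fin]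
    omega)
  set ι' : {i // μ i = 0} → {i // μ i = 0} := fun z => e.symm ((e z).1, !(e z).2) with hι'def
  set sgn : {i // μ i = 0} → ℝ := fun z => if (e z).2 then -1 else 1 with hsgndef
  have hι'ι' : ∀ z, ι' (ι' z) = z := by
    intro z
    simp [hι'def]
  have hsgnι' : ∀ z, sgn (ι' z) = -sgn z := by
    intro z
    simp only [hsgndef, hι'def, Equiv.apply_symm_apply]
    cases h : (e z).2 <;> simp [h]
  have hι'inj : Function.Injective ι' := Function.Involutive.injective hι'ι'
  have hsgnsq : ∀ z, sgn z * sgn z = 1 := by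
    intro z
    by_cases h : (e z).2 <;> simp [hsgndef, h]
  set Jf : Fin (Module.finrank ℝ E) → E := fun i =>
    if h : μ i = 0 then sgn ⟨i, h⟩ • b ((ι' ⟨i, h⟩ : {i // μ i = 0}) : Fin (Module.finrank ℝ E))
    else (Real.sqrt (μ i))⁻¹ • η (b i) with hJfdef
  set J : E →L[ℝ] E := LinearMap.toContinuousLinearMap (b.toBasis.constr ℝ Jf) with hJdef
  have hJb : ∀ i, J (b i) = Jf i := by
    intro i
    have h3 : J (b.toBasis i) = Jf i := by
      rw [hJdef, LinearMap.coe_toContinuousLinearMap', b.toBasis.constr_basis]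
    rwa [b.coe_toBasis] at h3
  have hJker : ∀ (i) (h : μ i = 0),
      J (b i) = sgn ⟨i, h⟩ • b ((ι' ⟨i, h⟩ : {i // μ i = 0}) : Fin (Module.finrank ℝ E)) := by
    intro i h
    rw [hJb i, hJfdef]
    simp [h]
  have hJnk : ∀ i, ¬ μ i = 0 → J (b i) = (Real.sqrt (μ i))⁻¹ • η (b i) := by
    intro i h
    rw [hJb i, hJfdef]
    simp [h]
  have L1 : ∀ (v : E) (c : ℝ), S v = c • v → c ≠ 0 → J v = (Real.sqrt c)⁻¹ • η v := by
    intro v c hv hc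
    have expand : J v = ∑ i, ⟪b i, v⟫ • J (b i) := by
      conv_lhs => rw [← b.sum_repr' v]
      rw [map_sum]
      exact Finset.sum_congr rfl fun i _ => by rw [ContinuousLinearMap.map_smul]
    rw [expand]
    have hterm : ∀ i, ⟪b i, v⟫ • J (b i) = ⟪b i, v⟫ • ((Real.sqrt c)⁻¹ • η (b i)) := by
      intro i
      by_cases hiv : ⟪b i, v⟫ = 0
      · rw [hiv, zero_smul, zero_smul]
      · have hμ : μ i = c := by
          by_contra hne
          exact hiv (horth_eig v c i hv hne)
        rw [hJnk i (by rw [hμ]; exact hc), hμ]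
    calc ∑ i, ⟪b i, v⟫ • J (b i)
        = ∑ i, ⟪b i, v⟫ • ((Real.sqrt c)⁻¹ • η (b i)) :=
          Finset.sum_congr rfl fun i _ => hterm i
      _ = (Real.sqrt c)⁻¹ • ∑ i, ⟪b i, v⟫ • η (b i) := by
          rw [Finset.smul_sum]
          exact Finset.sum_congr rfl fun i _ => smul_comm _ _ _
      _ = (Real.sqrt c)⁻¹ • η v := by
          congr 1
          have h8 : ∑ i, ⟪b i, v⟫ • η (b i) = η (∑ i, ⟪b i, v⟫ • b i) := by
            rw [map_sum]
            exact Finset.sum_congr rfl fun i _ => by rw [ContinuousLinearMap.map_smul]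
          rw [h8, b.sum_repr' v]
  have hext : ∀ A B : E →L[ℝ] E, (∀ i, A (b i) = B (b i)) → A = B := by
    intro A B h
    refine ContinuousLinearMap.coe_injective (b.toBasis.ext fun i => ?_)
    rw [b.coe_toBasis]
    exact h i
  have hJz : ∀ z : {i // μ i = 0},
      J (b (z : Fin (Module.finrank ℝ E))) = sgn z • b ((ι' z : {i // μ i = 0}) : Fin (Module.finrank ℝ E)) :=
    fun z => hJker z.1 z.2
  have hSη : ∀ i, ¬ μ i = 0 → S (η (b i)) = μ i • η (b i) := by
    intro i _
    have hcommS : S (η (b i)) = η (S (b i)) := by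
      rw [hSapp, hSapp, map_neg]
    rw [hcommS, hb i, ContinuousLinearMap.map_smul]
  have hηη : ∀ i, η (η (b i)) = -(μ i • b i) := by
    intro i
    have h9 := hSapp (b i)
    rw [hb i] at h9
    rw [h9, neg_neg]
  have hs1 : ∀ i, ¬ μ i = 0 →
      (Real.sqrt (μ i))⁻¹ * ((Real.sqrt (μ i))⁻¹ * μ i) = 1 := by
    intro i h
    rw [← mul_assoc, ← mul_inv, Real.mul_self_sqrt (hnn i), inv_mul_cancel₀ h]
  have hJJb : ∀ i, J (J (b i)) = -(b i) := by
    intro i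
    by_cases h : μ i = 0
    · rw [hJker i h, ContinuousLinearMap.map_smul, hJz (ι' ⟨i, h⟩), hsgnι', hι'ι', smul_smul]
      have h10 : sgn ⟨i, h⟩ * -sgn ⟨i, h⟩ = -1 := by rw [mul_neg, hsgnsq]
      rw [h10]
      simp
    · rw [hJnk i h, ContinuousLinearMap.map_smul, L1 _ _ (hSη i h) h, hηη i]
      simp only [smul_neg, smul_smul]
      rw [hs1 i h, one_smul]
  have hJJ : J * J = -1 := by
    apply hext
    intro i
    rw [ContinuousLinearMap.mul_apply, hJJb i]
    simp
  have hcommb : ∀ i, η (J (b i)) = J (η (b i)) := by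
    intro i
    by_cases h : μ i = 0
    · rw [hJker i h, ContinuousLinearMap.map_smul, hker _ (ι' ⟨i, h⟩).2, smul_zero,
        hker i h, map_zero]
    · rw [hJnk i h, ContinuousLinearMap.map_smul, L1 _ _ (hSη i h) h]
  have hcommη : η * J = J * η := by
    apply hext
    intro i
    rw [ContinuousLinearMap.mul_apply, ContinuousLinearMap.mul_apply, hcommb i]
  have hinner : ∀ i j, ⟪η (b i), η (b j)⟫ = μ i * ⟪b i, b j⟫ := by
    intro i j
    rw [← h1, hb i, real_inner_smul_left]
  have horthJ : ∀ i j, ⟪J (b i), J (b j)⟫ = if i = j then (1:ℝ) else 0 := by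
    intro i j
    by_cases hi : μ i = 0 <;> by_cases hj : μ j = 0
    · rw [hJker i hi, hJker j hj, real_inner_smul_left, real_inner_smul_right, horm]
      by_cases hij : i = j
      · subst hij
        simp only [if_pos rfl, if_true, mul_one]
        exact hsgnsq _
      · have hne : ((ι' ⟨i, hi⟩ : {i // μ i = 0}) : Fin (Module.finrank ℝ E))
            ≠ ((ι' ⟨j, hj⟩ : {i // μ i = 0}) : Fin (Module.finrank ℝ E)) := by
          intro hcc
          exact hij (congrArg Subtype.val (hι'inj (Subtype.ext hcc)))
        rw [if_neg hne, if_neg hij]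
        ring
    · have hij : i ≠ j := fun hcc => hj (hcc ▸ hi)
      rw [hJker i hi, hJnk j hj, real_inner_smul_left, real_inner_smul_right, if_neg hij]
      have h11 : ⟪b ((ι' ⟨i, hi⟩ : {i // μ i = 0}) : Fin (Module.finrank ℝ E)), η (b j)⟫ = 0 := by
        have h12 := hskew (b ((ι' ⟨i, hi⟩ : {i // μ i = 0}) : Fin (Module.finrank ℝ E))) (b j)
        rw [hker _ (ι' ⟨i, hi⟩).2, inner_zero_left] at h12
        linarith
      rw [h11]
      ring
    · have hij : i ≠ j := fun hcc => hi (hcc ▸ hj)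
      rw [hJnk i hi, hJker j hj, real_inner_smul_left, real_inner_smul_right, if_neg hij]
      have h13 : ⟪η (b i), b ((ι' ⟨j, hj⟩ : {i // μ i = 0}) : Fin (Module.finrank ℝ E))⟫ = 0 := by
        rw [hskew, hker _ (ι' ⟨j, hj⟩).2, inner_zero_right, neg_zero]
      rw [h13]
      ring
    · rw [hJnk i hi, hJnk j hj, real_inner_smul_left, real_inner_smul_right, hinner, horm]
      by_cases hij : i = j
      · subst hij
        simp only [if_pos rfl, if_true, mul_one]
        exact hs1 i hi
      · simp only [if_neg hij]
        ring
  have hON : Orthonormal ℝ (fun i => J (b i)) := orthonormal_iff_ite.mpr horthJ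
  have hJo : ∀ u v : E, ⟪J u, J v⟫ = ⟪u, v⟫ := by
    intro u v
    have hu : J u = ∑ i, b.repr u i • J (b i) := by
      conv_lhs => rw [← b.sum_repr u]
      rw [map_sum]
      exact Finset.sum_congr rfl fun i _ => by rw [ContinuousLinearMap.map_smul]
    have hv : J v = ∑ i, b.repr v i • J (b i) := by
      conv_lhs => rw [← b.sum_repr v]
      rw [map_sum]
      exact Finset.sum_congr rfl fun i _ => by rw [ContinuousLinearMap.map_smul]
    rw [hu, hv, hON.inner_sum]
    have h13 : ⟪u, v⟫ = ∑ i, (starRingEnd ℝ) (b.repr u i) * b.repr v i := by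
      conv_lhs => rw [← b.sum_repr u, ← b.sum_repr v]
      rw [b.orthonormal.inner_sum]
    rw [h13]
  exact ⟨J, hJo, hJJ, hcommη⟩

/-- Let `g ∈ SO(E)` not have `1` as an eigenvalue.  Then the principal logarithm of `-g`
(the skew-adjoint `η` with `exp η = -g` and spectrum in `(-iπ, iπ)`, i.e. `‖η‖ < π`)
is of the form `ξ - πJ` for some skew-adjoint `ξ` with `exp ξ = g` and a unitary structure
`J` commuting with `ξ`. -/
theorem stmt_8 (E : Type*) [NormedAddCommGroup E] [InnerProductSpace ℝ E]
    [FiniteDimensional ℝ E] (g : E →L[ℝ] E)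
    (hgo : ∀ u v : E, ⟪g u, g v⟫ = ⟪u, v⟫)
    (hdet : LinearMap.det (g : E →ₗ[ℝ] E) = 1)
    (hone : ∀ v : E, g v = v → v = 0)
    (η : E →L[ℝ] E) (hη : ContinuousLinearMap.adjoint η = -η)
    (hηexp : NormedSpace.exp η = -g) (hηnorm : ‖η‖ < Real.pi) :
    ∃ ξ J : E →L[ℝ] E, ContinuousLinearMap.adjoint ξ = -ξ ∧ NormedSpace.exp ξ = g ∧
      (∀ u v : E, ⟪J u, J v⟫ = ⟪u, v⟫) ∧ J * J = -1 ∧ ξ * J = J * ξ ∧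
      η = ξ - Real.pi • J := by
  classical
  -- the dimension is even
  have heven : Even (Module.finrank ℝ E) := by
    set b0 := stdOrthonormalBasis ℝ E with hb0
    set M := LinearMap.toMatrix b0.toBasis b0.toBasis (g : E →ₗ[ℝ] E) with hM
    have hMentry : ∀ i j, M i j = ⟪b0 i, g (b0 j)⟫ := by
      intro i j
      rw [hM, LinearMap.toMatrix_apply, b0.coe_toBasis_repr_apply, b0.repr_apply_apply,
        b0.coe_toBasis]
      rfl
    have hMTM : M.transpose * M = 1 := by
      ext i j
      rw [Matrix.mul_apply]
      have h1 : ∀ k, M.transpose i k * M k j = ⟪g (b0 i), b0 k⟫ * ⟪b0 k, g (b0 j)⟫ := by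
        intro k
        rw [Matrix.transpose_apply, hMentry, hMentry, real_inner_comm (b0 k) (g (b0 i))]
      rw [Finset.sum_congr rfl fun k _ => h1 k, b0.sum_inner_mul_inner, hgo]
      have := orthonormal_iff_ite.mp b0.orthonormal i j
      rw [this, Matrix.one_apply]
    have hdetM : M.det = 1 := by
      rw [hM, LinearMap.det_toMatrix]
      exact hdet
    have hdetM1 : (M - 1).det ≠ 0 := by
      have hMeq : M - 1 = LinearMap.toMatrix b0.toBasis b0.toBasis
          ((g : E →ₗ[ℝ] E) - LinearMap.id) := by
        rw [map_sub, LinearMap.toMatrix_id, hM]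
      rw [hMeq, LinearMap.det_toMatrix]
      intro h0
      have hlt := LinearMap.bot_lt_ker_of_det_eq_zero h0
      obtain ⟨v, hv, hv0⟩ := Submodule.exists_mem_ne_zero_of_ne_bot hlt.ne'
      rw [LinearMap.mem_ker, LinearMap.sub_apply, LinearMap.id_apply, sub_eq_zero] at hv
      exact hv0 (hone v hv)
    have hMT : (M - 1).transpose = M.transpose * (1 - M) := by
      rw [Matrix.mul_sub, mul_one, hMTM, Matrix.transpose_sub, Matrix.transpose_one]
    have hkey : (1:ℝ) * (M - 1).det
        = (-1) ^ Fintype.card (Fin (Module.finrank ℝ E)) * (M - 1).det := by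
      rw [one_mul]
      conv_lhs => rw [← Matrix.det_transpose, hMT, Matrix.det_mul]
      have hT : M.transpose.det = 1 := by rw [Matrix.det_transpose, hdetM]
      rw [hT, one_mul, (neg_sub M 1).symm, Matrix.det_neg]
    have hpow := (mul_right_cancel₀ hdetM1 hkey).symm
    have hres := (neg_one_pow_eq_one_iff_even (by norm_num : (-1:ℝ) ≠ 1)).mp hpow
    simpa using hres
  obtain ⟨J, hJo, hJJ, hcommη⟩ := existsJ_aux E η hη heven
  -- adjoint of J
  have hJadj : ContinuousLinearMap.adjoint J = -J := by
    ext u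
    refine ext_inner_right ℝ fun v => ?_
    rw [ContinuousLinearMap.adjoint_inner_left]
    have hJJu : J (J u) = -u := by
      have := congrFun (congrArg (fun (A : E →L[ℝ] E) => (A : E → E)) hJJ) u
      simpa using this
    have h2 : ⟪u, J v⟫ = -⟪J u, v⟫ := by
      calc ⟪u, J v⟫ = ⟪-J (J u), J v⟫ := by rw [hJJu, neg_neg]
        _ = -⟪J (J u), J v⟫ := by rw [inner_neg_left]
        _ = -⟪J u, v⟫ := by rw [hJo]
    rw [h2]
    simp
  -- exp(π J) = -1
  let +nondep : NormedAlgebra ℚ (E →L[ℝ] E) := .restrictScalars ℚ ℝ (E →L[ℝ] E)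
  have hexpJ : NormedSpace.exp (Real.pi • J) = -1 := by
    set φ := Complex.liftAux J hJJ with hφdef
    have hφc : Continuous φ := φ.toLinearMap.continuous_of_finiteDimensional
    have h1 : Real.pi • J = φ (Real.pi • Complex.I) := by
      rw [map_smul, hφdef, Complex.liftAux_apply_I]
    rw [h1, ← NormedSpace.map_exp φ hφc]
    have h2 : NormedSpace.exp (Real.pi • Complex.I) = -1 := by
      rw [← Complex.exp_eq_exp_ℂ,
        Complex.real_smul, Complex.exp_pi_mul_I]
    rw [h2, map_neg, map_one]
  have hsmulmul : (Real.pi • J) * J = J * (Real.pi • J) := by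
    rw [ContinuousLinearMap.mul_def, ContinuousLinearMap.mul_def,
      ContinuousLinearMap.smul_comp, ContinuousLinearMap.comp_smul]
  have hcommute : Commute η (Real.pi • J) := by
    show η * (Real.pi • J) = (Real.pi • J) * η
    rw [ContinuousLinearMap.mul_def, ContinuousLinearMap.mul_def,
      ContinuousLinearMap.comp_smul, ContinuousLinearMap.smul_comp,
      ← ContinuousLinearMap.mul_def, ← ContinuousLinearMap.mul_def, hcommη]
  refine ⟨η + Real.pi • J, J, ?_, ?_, hJo, hJJ, ?_, ?_⟩
  · rw [map_add, hη]
    have : ContinuousLinearMap.adjoint (Real.pi • J) = Real.pi • ContinuousLinearMap.adjoint J := by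
      simp
    rw [this, hJadj, smul_neg]
    abel
  · rw [NormedSpace.exp_add_of_commute hcommute, hηexp, hexpJ]
    simp
  · rw [add_mul, mul_add, hcommη, hsmulmul]
  · abel
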